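/- For the Gaussian weight ω^{[u,Θ]}(ξ) = ρ det(2πΘ)^{-1/2} exp(-(ξ-u)ᵀΘ⁻¹(ξ-u)/2) with Θ symmetric positive definite, the generalized Hermite functions H_α^Θ = (-1)^{|α|} ∂^α ω^{[u,Θ]}/∂ξ^α satisfy ξ_d H_α^Θ = Σ_j θ_{jd} H_{α+e_j}^Θ + u_d H_α^Θ + α_d H_{α-e_d}^Θ. -/

import Mathlib

open Matrix

/-- The generalized Hermite functions `H_α^Θ = (-1)^{|α|} ∂^α ω^{[u,Θ]}` for a Gaussian
weight with symmetric positive definite covariance `Θ` satisfy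
`ξ_d H_α^Θ = Σ_j θ_{jd} H_{α+e_j}^Θ + u_d H_α^Θ + α_d H_{α-e_d}^Θ`. -/
theorem stmt_18 (D : ℕ) (hD : 1 ≤ D) (ρ : ℝ) (hρ : 0 < ρ)
    (u : Fin D → ℝ) (Θ : Matrix (Fin D) (Fin D) ℝ)
    (hΘs : Θ.IsSymm) (hΘpd : Θ.PosDef)
    (ω : (Fin D → ℝ) → ℝ)
    (hω : ∀ ξ, ω ξ = ρ * (Real.sqrt ((2 * Real.pi) ^ D * Θ.det))⁻¹ *
      Real.exp (-((ξ - u) ⬝ᵥ (Θ⁻¹ *ᵥ (ξ - u))) / 2))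
    (Dω : (Fin D → ℕ) → (Fin D → ℝ) → ℝ)
    (hD0 : Dω 0 = ω)
    (hDrec : ∀ (α : Fin D → ℕ) (d : Fin D), Dω (α + Pi.single d 1) =
      fun ξ => deriv (fun s => Dω α (Function.update ξ d s)) (ξ d))
    (H : (Fin D → ℕ) → (Fin D → ℝ) → ℝ)
    (hH : ∀ α, H α = fun ξ => (-1 : ℝ) ^ (∑ d, α d) * Dω α ξ)
    (α : Fin D → ℕ) (d : Fin D) (ξ : Fin D → ℝ) :
    ξ d * H α ξ = (∑ j, Θ j d * H (α + Pi.single j 1) ξ)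
      + u d * H α ξ + (α d : ℝ) * H (α - Pi.single d 1) ξ := by
  -- symmetry of the inverse
  have hA : (Θ⁻¹)ᵀ = Θ⁻¹ := by rw [Matrix.transpose_nonsing_inv, hΘs.eq]
  have hdet : IsUnit Θ.det := isUnit_iff_ne_zero.mpr (ne_of_gt hΘpd.det_pos)
  -- smoothness of ω
  have hωs : ContDiff ℝ ⊤ ω := by
    have : ω = fun ξ => ρ * (Real.sqrt ((2 * Real.pi) ^ D * Θ.det))⁻¹ *
        Real.exp (-((ξ - u) ⬝ᵥ (Θ⁻¹ *ᵥ (ξ - u))) / 2) := funext hω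
    rw [this]
    apply ContDiff.mul contDiff_const
    apply Real.contDiff_exp.comp
    apply ContDiff.div_const
    apply ContDiff.neg
    simp only [dotProduct, Matrix.mulVec, Pi.sub_apply]
    apply ContDiff.sum
    intro i _
    apply ContDiff.mul
    · exact (contDiff_apply (𝕜 := ℝ) (E := ℝ) i).sub contDiff_const
    · apply ContDiff.sum
      intro m _
      exact ContDiff.mul contDiff_const ((contDiff_apply (𝕜 := ℝ) (E := ℝ) m).sub contDiff_const)
  -- derivative of ω along coordinate k
  have hω' : ∀ (ξ : Fin D → ℝ) (k : Fin D),
      HasDerivAt (fun s => ω (Function.update ξ k s)) (-(Θ⁻¹ *ᵥ (ξ - u)) k * ω ξ) (ξ k) := by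
    intro ξ k
    have hfun : (fun s => ω (Function.update ξ k s)) = fun s =>
        ρ * (Real.sqrt ((2 * Real.pi) ^ D * Θ.det))⁻¹ *
        Real.exp (-(∑ i, (Function.update ξ k s i - u i) *
          ∑ m, Θ⁻¹ i m * (Function.update ξ k s m - u m)) / 2) := by
      funext s
      rw [hω]
      simp only [dotProduct, Matrix.mulVec, Pi.sub_apply]
    have h1 : ∀ i : Fin D, HasDerivAt (fun s => Function.update ξ k s i - u i)
        (if i = k then 1 else 0) (ξ k) := by
      intro i
      by_cases h : i = k
      · subst h
        simp only [if_pos rfl]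
        have : (fun s => Function.update ξ i s i - u i) = fun s => s - u i := by
          funext s; rw [Function.update_self]
        rw [this]
        simpa using (hasDerivAt_id (ξ i)).sub_const (u i)
      · simp only [if_neg h]
        have : (fun s => Function.update ξ k s i - u i) = fun _ => ξ i - u i := by
          funext s; rw [Function.update_of_ne h]
        rw [this]
        exact hasDerivAt_const _ _
    have h2 : ∀ i : Fin D, HasDerivAt (fun s => ∑ m, Θ⁻¹ i m * (Function.update ξ k s m - u m))
        (∑ m, Θ⁻¹ i m * (if m = k then 1 else 0)) (ξ k) :=
      fun i => HasDerivAt.fun_sum (fun m _ => (h1 m).const_mul (Θ⁻¹ i m))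
    have h3 := HasDerivAt.fun_sum (fun i (_ : i ∈ Finset.univ) => (h1 i).mul (h2 i))
    -- clean up point values inside h3
    simp only [Function.update_eq_self, Pi.mul_apply] at h3
    have hQval : (∑ i, ((if i = k then (1:ℝ) else 0) * ∑ m, Θ⁻¹ i m * (ξ m - u m)
        + (ξ i - u i) * ∑ m, Θ⁻¹ i m * (if m = k then 1 else 0)))
        = 2 * (Θ⁻¹ *ᵥ (ξ - u)) k := by
      have e1 : ∀ i : Fin D, (∑ m, Θ⁻¹ i m * (if m = k then (1:ℝ) else 0)) = Θ⁻¹ i k := by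
        intro i; simp [mul_ite]
      have e2 : (∑ i, ((if i = k then (1:ℝ) else 0) * ∑ m, Θ⁻¹ i m * (ξ m - u m)))
          = ∑ m, Θ⁻¹ k m * (ξ m - u m) := by
        simp [ite_mul]
      rw [Finset.sum_add_distrib, e2]
      have e3 : (∑ i, (ξ i - u i) * Θ⁻¹ i k) = ∑ m, Θ⁻¹ k m * (ξ m - u m) := by
        have := congrFun (congrFun hA k)
        calc (∑ i, (ξ i - u i) * Θ⁻¹ i k) = ∑ i, (Θ⁻¹)ᵀ k i * (ξ i - u i) := by
              apply Finset.sum_congr rfl; intro i _; rw [Matrix.transpose_apply]; ring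
          _ = ∑ m, Θ⁻¹ k m * (ξ m - u m) := by rw [hA]
      have e4 : (∑ i, (ξ i - u i) * ∑ m, Θ⁻¹ i m * (if m = k then (1:ℝ) else 0))
          = ∑ i, (ξ i - u i) * Θ⁻¹ i k := by
        apply Finset.sum_congr rfl; intro i _; rw [e1]
      rw [e4, e3]
      have : (Θ⁻¹ *ᵥ (ξ - u)) k = ∑ m, Θ⁻¹ k m * (ξ m - u m) := by
        simp [Matrix.mulVec, dotProduct]
      rw [this]; ring
    rw [hQval] at h3
    have h4 := (((h3.neg).div_const 2).exp).const_mul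
        (ρ * (Real.sqrt ((2 * Real.pi) ^ D * Θ.det))⁻¹)
    simp only [Pi.neg_apply] at h4
    rw [hfun]
    refine h4.congr_deriv ?_
    rw [hω]
    simp only [dotProduct, Matrix.mulVec, Pi.sub_apply, Function.update_eq_self]
    ring
  -- smoothness of all Dω γ
  have hsub_add : ∀ (γ : Fin D → ℕ) (k : Fin D), γ k ≠ 0 →
      (γ - Pi.single k 1) + Pi.single k 1 = γ := by
    intro γ k hk
    funext i
    by_cases h : i = k
    · subst h
      simp only [Pi.add_apply, Pi.sub_apply, Pi.single_eq_same]
      omega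
    · simp [Pi.single_eq_of_ne h]
  have hsum_succ : ∀ (γ : Fin D → ℕ) (k : Fin D),
      (∑ i : Fin D, (γ + Pi.single k 1 : Fin D → ℕ) i) = (∑ i : Fin D, γ i) + 1 := by
    intro γ k
    simp only [Pi.add_apply, Finset.sum_add_distrib]
    congr 1
    simp [Pi.single_apply]
  have key : ∀ n : ℕ, ∀ γ : Fin D → ℕ, (∑ i : Fin D, γ i) = n → ContDiff ℝ ⊤ (Dω γ) := by
    intro n
    induction n with
    | zero =>
      intro γ hγ
      have : γ = 0 := by
        funext i
        exact Finset.sum_eq_zero_iff.mp hγ i (Finset.mem_univ i)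
      rw [this, hD0]; exact hωs
    | succ n ih =>
      intro γ hγ
      have hne : ∃ k, γ k ≠ 0 := by
        by_contra h
        push_neg at h
        simp only [Finset.sum_eq_zero (fun i _ => h i)] at hγ
        omega
      obtain ⟨k, hk⟩ := hne
      set β := γ - Pi.single k 1 with hβdef
      have hβk : β + Pi.single k 1 = γ := hsub_add γ k hk
      have hβ : (∑ i : Fin D, β i) = n := by
        have := hsum_succ β k
        rw [hβk, hγ] at this
        omega
      have hβs := ih β hβ
      have : Dω γ = fun ξ => fderiv ℝ (Dω β) ξ (Pi.single k 1) := by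
        funext ξ'
        rw [← hβk, hDrec]
        show deriv (fun s => Dω β (Function.update ξ' k s)) (ξ' k) = _
        have hfd : HasFDerivAt (Dω β) (fderiv ℝ (Dω β) ξ') (Function.update ξ' k (ξ' k)) := by
          rw [Function.update_eq_self]
          exact (hβs.differentiable (by simp) ξ').hasFDerivAt
        have h := hfd.comp_hasDerivAt (ξ' k) (hasDerivAt_update ξ' k (ξ' k))
        exact h.deriv
      rw [this]
      exact (hβs.fderiv_right le_top).clm_apply contDiff_const
  -- the coordinate derivative of any Dω γ
  have hC : ∀ (γ : Fin D → ℕ) (ξ : Fin D → ℝ) (k : Fin D),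
      HasDerivAt (fun s => Dω γ (Function.update ξ k s)) (Dω (γ + Pi.single k 1) ξ) (ξ k) := by
    intro γ ξ' k
    have hsm := key (∑ i : Fin D, γ i) γ rfl
    have hfd : HasFDerivAt (Dω γ) (fderiv ℝ (Dω γ) ξ') (Function.update ξ' k (ξ' k)) := by
      rw [Function.update_eq_self]
      exact (hsm.differentiable (by simp) ξ').hasFDerivAt
    have h := hfd.comp_hasDerivAt (ξ' k) (hasDerivAt_update ξ' k (ξ' k))
    have hval : Dω (γ + Pi.single k 1) ξ' = fderiv ℝ (Dω γ) ξ' (Pi.single k 1) := by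
      rw [hDrec]
      show deriv (fun s => Dω γ (Function.update ξ' k s)) (ξ' k) = _
      exact h.deriv
    rw [hval]
    exact h
  -- the first derivative of ω in explicit form
  have hD1 : ∀ (j : Fin D) (ξ : Fin D → ℝ),
      Dω (Pi.single j 1) ξ = -(Θ⁻¹ *ᵥ (ξ - u)) j * ω ξ := by
    intro j ξ'
    have h := hDrec 0 j
    rw [zero_add] at h
    rw [h]
    simp only [hD0]
    exact (hω' ξ' j).deriv
  -- the main recursion for Dω
  have star : ∀ (γ : Fin D → ℕ) (d : Fin D) (ξ : Fin D → ℝ),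
      ξ d * Dω γ ξ + (γ d : ℝ) * Dω (γ - Pi.single d 1) ξ
        = u d * Dω γ ξ - ∑ j, Θ d j * Dω (γ + Pi.single j 1) ξ := by
    have main : ∀ n : ℕ, ∀ γ : Fin D → ℕ, (∑ i : Fin D, γ i) = n → ∀ (d : Fin D) (ξ : Fin D → ℝ),
        ξ d * Dω γ ξ + (γ d : ℝ) * Dω (γ - Pi.single d 1) ξ
          = u d * Dω γ ξ - ∑ j, Θ d j * Dω (γ + Pi.single j 1) ξ := by
      intro n
      induction n with
      | zero =>
        intro γ hγ d ξ'
        have hγ0 : γ = 0 := by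
          funext i
          exact Finset.sum_eq_zero_iff.mp hγ i (Finset.mem_univ i)
        subst hγ0
        have hsum : (∑ j, Θ d j * Dω ((0 : Fin D → ℕ) + Pi.single j 1) ξ')
            = -((ξ' - u) d) * ω ξ' := by
          have : ∀ j : Fin D, Θ d j * Dω ((0 : Fin D → ℕ) + Pi.single j 1) ξ'
              = -(Θ d j * (Θ⁻¹ *ᵥ (ξ' - u)) j * ω ξ') := by
            intro j
            rw [zero_add, hD1]
            ring
          rw [Finset.sum_congr rfl (fun j _ => this j)]
          rw [Finset.sum_neg_distrib]
          have : (∑ j, Θ d j * (Θ⁻¹ *ᵥ (ξ' - u)) j * ω ξ')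
              = (Θ *ᵥ (Θ⁻¹ *ᵥ (ξ' - u))) d * ω ξ' := by
            rw [← Finset.sum_mul]
            simp [Matrix.mulVec, dotProduct]
          rw [this]
          rw [Matrix.mulVec_mulVec, Matrix.mul_nonsing_inv Θ hdet, Matrix.one_mulVec]
          ring
        rw [hD0, hsum]
        simp only [Pi.zero_apply, Pi.sub_apply, Nat.cast_zero]
        ring
      | succ n ih =>
        intro γ hγ d ξ'
        have hne : ∃ k, γ k ≠ 0 := by
          by_contra h
          push_neg at h
          simp only [Finset.sum_eq_zero (fun i _ => h i)] at hγ
          omega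
        obtain ⟨k, hk⟩ := hne
        set β := γ - Pi.single k 1 with hβdef
        have hβk : β + Pi.single k 1 = γ := hsub_add γ k hk
        have hβ : (∑ i : Fin D, β i) = n := by
          have := hsum_succ β k
          rw [hβk, hγ] at this
          omega
        -- functions of the k-th coordinate
        have hLR : (fun s => Function.update ξ' k s d * Dω β (Function.update ξ' k s)
              + (β d : ℝ) * Dω (β - Pi.single d 1) (Function.update ξ' k s))
            = (fun s => u d * Dω β (Function.update ξ' k s)
              - ∑ j, Θ d j * Dω (β + Pi.single j 1) (Function.update ξ' k s)) := by
          funext s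
          exact ih β hβ d (Function.update ξ' k s)
        have hcoord : HasDerivAt (fun s => Function.update ξ' k s d)
            (if k = d then 1 else 0) (ξ' k) := by
          by_cases h : k = d
          · subst h
            have : (fun s => Function.update ξ' k s k) = fun s => s := by
              funext s; rw [Function.update_self]
            rw [this, if_pos rfl]
            exact hasDerivAt_id _
          · have : (fun s => Function.update ξ' k s d) = fun _ => ξ' d := by
              funext s; rw [Function.update_of_ne (Ne.symm h)]
            rw [this, if_neg h]
            exact hasDerivAt_const _ _
        have hL : HasDerivAt (fun s => Function.update ξ' k s d * Dω β (Function.update ξ' k s)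
              + (β d : ℝ) * Dω (β - Pi.single d 1) (Function.update ξ' k s))
            (((if k = d then 1 else 0) * Dω β ξ' + ξ' d * Dω (β + Pi.single k 1) ξ')
              + (β d : ℝ) * Dω ((β - Pi.single d 1) + Pi.single k 1) ξ') (ξ' k) := by
          have h1 := hcoord.mul (hC β ξ' k)
          simp only [Function.update_eq_self] at h1
          exact h1.add ((hC (β - Pi.single d 1) ξ' k).const_mul ((β d : ℝ)))
        have hR : HasDerivAt (fun s => u d * Dω β (Function.update ξ' k s)
              - ∑ j, Θ d j * Dω (β + Pi.single j 1) (Function.update ξ' k s))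
            (u d * Dω (β + Pi.single k 1) ξ'
              - ∑ j, Θ d j * Dω ((β + Pi.single j 1) + Pi.single k 1) ξ') (ξ' k) := by
          exact ((hC β ξ' k).const_mul (u d)).sub
            (HasDerivAt.fun_sum (fun j _ => (hC (β + Pi.single j 1) ξ' k).const_mul (Θ d j)))
        rw [hLR] at hL
        have heq := hL.unique hR
        -- now massage heq into the goal
        have hβkγ : β + Pi.single k 1 = γ := hβk
        have hsumj : ∀ j, (β + Pi.single j 1) + Pi.single k 1 = γ + Pi.single j 1 := by
          intro j
          rw [← hβkγ]
          funext i
          simp only [Pi.add_apply]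
          ring
        have hterm : (if k = d then (1:ℝ) else 0) * Dω β ξ'
            + (β d : ℝ) * Dω ((β - Pi.single d 1) + Pi.single k 1) ξ'
            = (γ d : ℝ) * Dω (γ - Pi.single d 1) ξ' := by
          by_cases h : k = d
          · have hγd : γ d = β d + 1 := by
              rw [← hβkγ]; simp [Pi.add_apply, Pi.single_apply, h]
            have hγsub : γ - Pi.single d 1 = β := by
              rw [← hβkγ, h]
              funext i
              by_cases hi : i = d
              · subst hi; simp
              · simp [Pi.single_eq_of_ne hi]
            rw [if_pos h, hγd, hγsub, h]
            by_cases hb : β d = 0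
            · rw [hb]; push_cast; ring
            · have hbb : (β - Pi.single d 1) + Pi.single d 1 = β := hsub_add β d hb
              rw [hbb]
              push_cast
              ring
          · have hγd : γ d = β d := by
              rw [← hβkγ]; simp [Pi.single_eq_of_ne (Ne.symm h)]
            have hγsub : γ - Pi.single d 1 = (β - Pi.single d 1) + Pi.single k 1 := by
              rw [← hβkγ]
              funext i
              simp only [Pi.add_apply, Pi.sub_apply, Pi.single_apply]
              split_ifs with h1 h2 <;> (try omega) <;> simp_all
            rw [if_neg h, hγd, hγsub]
            ring
        have hDγ : Dω γ = Dω (β + Pi.single k 1) := by rw [hβkγ]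
        have hsumeq : (∑ j, Θ d j * Dω ((β + Pi.single j 1) + Pi.single k 1) ξ')
            = ∑ j, Θ d j * Dω (γ + Pi.single j 1) ξ' := by
          apply Finset.sum_congr rfl
          intro j _
          rw [hsumj j]
        rw [hsumeq, ← hDγ] at heq
        linear_combination heq - hterm
    intro γ
    exact main _ γ rfl
  -- final assembly
  have hstar := star α d ξ
  have hθ : ∀ j, Θ j d = Θ d j := fun j => hΘs.apply d j
  simp only [hH]
  have hsum2 : (∑ j, Θ j d * ((-1:ℝ) ^ (∑ i : Fin D, (α + Pi.single j 1 : Fin D → ℕ) i)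
        * Dω (α + Pi.single j 1) ξ))
      = -((-1:ℝ) ^ (∑ i : Fin D, α i)) * ∑ j, Θ d j * Dω (α + Pi.single j 1) ξ := by
    rw [Finset.mul_sum]
    apply Finset.sum_congr rfl
    intro j _
    rw [hsum_succ α j, pow_succ, hθ j]
    ring
  rw [hsum2]
  by_cases hd : α d = 0
  · have hαsub : α - Pi.single d 1 = α := by
      funext i
      by_cases hi : i = d
      · subst hi; simp [hd]
      · simp [Pi.single_eq_of_ne hi]
    rw [hαsub, hd] at hstar ⊢
    push_cast at hstar ⊢
    linear_combination ((-1:ℝ) ^ (∑ i : Fin D, α i)) * hstar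
  · have hn : (∑ i : Fin D, α i) = (∑ i : Fin D, (α - Pi.single d 1 : Fin D → ℕ) i) + 1 := by
      conv_lhs => rw [← hsub_add α d hd]
      rw [hsum_succ]
    rw [hn, pow_succ]
    linear_combination (-((-1:ℝ) ^ (∑ i : Fin D, (α - Pi.single d 1 : Fin D → ℕ) i))) * hstar
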